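/- Let P be a symmetric positive definite n×n real matrix and κ > 0. If the block matrix [[(2-κ)I - P, Fᵀ],[F, P]] is positive semidefinite, then Fᵀ P⁻¹ F - P⁻¹ ≼ -κ I (i.e., Fᵀ P⁻¹ F ≼ P⁻¹ - κI). -/

import Mathlib

open Matrix

/-- Schur complement argument: if the block matrix
`[[(2-κ)I - P, Fᵀ], [F, P]]` is PSD with `P ≻ 0` and `κ > 0`, then
`Fᵀ P⁻¹ F ≼ P⁻¹ - κ I`. -/
theorem schur_contraction_lmi
    {n : ℕ} (P F : Matrix (Fin n) (Fin n) ℝ)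
    (hP : P.PosDef) (hPsymm : P.IsSymm)
    (κ : ℝ) (hκ : 0 < κ)
    (hblock : (Matrix.fromBlocks ((2 - κ) • (1 : Matrix (Fin n) (Fin n) ℝ) - P)
        Fᵀ F P).PosSemidef) :
    (P⁻¹ - κ • (1 : Matrix (Fin n) (Fin n) ℝ) - Fᵀ * P⁻¹ * F).PosSemidef := by
  haveI : Invertible P := hP.isUnit.invertible
  have hFH : (Fᵀ)ᴴ = F := by
    ext i j; simp [conjTranspose]
  have h1 : ((2 - κ) • (1 : Matrix (Fin n) (Fin n) ℝ) - P - Fᵀ * P⁻¹ * F).PosSemidef := by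
    have := (Matrix.PosDef.fromBlocks₂₂
      ((2 - κ) • (1 : Matrix (Fin n) (Fin n) ℝ) - P) Fᵀ hP).mp
    rw [hFH] at this
    exact this hblock
  have h2 : (((1 : Matrix (Fin n) (Fin n) ℝ) - P)ᴴ * P⁻¹
      * ((1 : Matrix (Fin n) (Fin n) ℝ) - P)).PosSemidef :=
    hP.inv.posSemidef.conjTranspose_mul_mul_same _
  have key := h1.add h2
  have hIP : P⁻¹ * P = 1 := Matrix.nonsing_inv_mul P hP.det_pos.ne'.isUnit
  have hPI : P * P⁻¹ = 1 := Matrix.mul_nonsing_inv P hP.det_pos.ne'.isUnit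
  have hsymm : ((1 : Matrix (Fin n) (Fin n) ℝ) - P)ᴴ = 1 - P := by
    ext i j; simp [conjTranspose, hPsymm.apply]
  have heq : ((2 - κ) • (1 : Matrix (Fin n) (Fin n) ℝ) - P - Fᵀ * P⁻¹ * F) +
      (((1 : Matrix (Fin n) (Fin n) ℝ) - P)ᴴ * P⁻¹ * ((1 : Matrix (Fin n) (Fin n) ℝ) - P))
      = P⁻¹ - κ • (1 : Matrix (Fin n) (Fin n) ℝ) - Fᵀ * P⁻¹ * F := by
    rw [hsymm]
    have : ((1 : Matrix (Fin n) (Fin n) ℝ) - P) * P⁻¹ * ((1 : Matrix (Fin n) (Fin n) ℝ) - P)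
        = P⁻¹ - (2:ℝ) • (1 : Matrix (Fin n) (Fin n) ℝ) + P := by
      simp only [Matrix.sub_mul, Matrix.mul_sub, Matrix.one_mul, Matrix.mul_one, hIP, hPI]
      rw [two_smul]; abel
    rw [this, sub_smul]
    abel
  rw [heq] at key
  exact key
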